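/- For n ≥ 2, let G_n=(V_n,E_n) be the graph with V_n := {a_i : i ∈ [n]} ∪ {u_{i,j} : i ∈ [n−1], j ∈ [2]} and E_n := {{a_i, u_{i,j}} : i ∈ [n−1], j ∈ [2]} ∪ {{a_i, u_{i−1,j}} : i ∈ [n] ∖ {1}, j ∈ [2]}, and let A := {a_{2i} : i ∈ [⌊n/2⌋]}. Then the number of minimal connected Roman dominating functions g on G_n with V_2(g) = A satisfies |C_{𝒞ℛ𝒟ℱ,G_n}[A]| ≥ 2^{n/3}. -/

import Mathlib

open Set

variable {V : Type*}

/-- The set of vertices on which `f` takes value `i`. -/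
def Vlevel (f : V → ℕ) (i : ℕ) : Set V := {v | f v = i}

/-- Closed neighborhood of `v` inside the induced subgraph `G[W]`. -/
def closedNbhdIn (G : SimpleGraph V) (W : Set V) (v : V) : Set V :=
  {u ∈ W | u = v ∨ G.Adj u v}

/-- Closed neighborhood of a set `A` inside the induced subgraph `G[W]`. -/
def closedNbhdSetIn (G : SimpleGraph V) (W A : Set V) : Set V :=
  ⋃ u ∈ A, closedNbhdIn G W u

/-- Private neighborhood `P_{G[W],A}(v) = N[v] \ N[A \ {v}]` inside `G[W]`. -/
def privNbhd (G : SimpleGraph V) (W A : Set V) (v : V) : Set V :=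
  closedNbhdIn G W v \ closedNbhdSetIn G W (A \ {v})

/-- Closed neighborhood `N[v]` in `G`. -/
def closedNbhd (G : SimpleGraph V) (v : V) : Set V := {u | u = v ∨ G.Adj u v}

/-- Closed neighborhood `N[A]` of a set in `G`. -/
def closedNbhdSet (G : SimpleGraph V) (A : Set V) : Set V := ⋃ v ∈ A, closedNbhd G v

/-- Open neighborhood `N(A)` of a set in `G`. -/
def openNbhdSet (G : SimpleGraph V) (A : Set V) : Set V := ⋃ v ∈ A, G.neighborSet v

/-- Characteristic function of a set. -/
noncomputable def chi (S : Set V) : V → ℕ := S.indicator 1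

/-- Roman dominating function: values in {0,1,2}, and every vertex of value 0 has
a neighbor of value 2. -/
def IsRDF (G : SimpleGraph V) (f : V → ℕ) : Prop :=
  (∀ v, f v ≤ 2) ∧ ∀ v, f v = 0 → ∃ u, G.Adj v u ∧ f u = 2

/-- `f` is minimal with respect to the pointwise order among functions with property `P`. -/
def MinimalWrt (P : (V → ℕ) → Prop) (f : V → ℕ) : Prop :=
  P f ∧ ∀ g, P g → g ≤ f → g = f

/-- `C_{P,G}[A]`: minimal functions with property `P` whose set of vertices of value 2 is `A`. -/
def CSet (P : (V → ℕ) → Prop) (A : Set V) : Set (V → ℕ) :=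
  {f | MinimalWrt P f ∧ Vlevel f 2 = A}

/-- Nice Roman domination property. -/
def IsNiceRDP (G : SimpleGraph V) (P : (V → ℕ) → Prop) : Prop :=
  (∀ f, P f → IsRDF G f) ∧
  (∀ f, P f → ∀ v ∈ Vlevel f 0, P (f + chi {v})) ∧
  (∀ f, P f → ∀ v ∈ Vlevel f 2,
    (P (f - chi {v}) ↔ privNbhd G (Vlevel f 0 ∪ Vlevel f 2) (Vlevel f 2) v ⊆ {v}))

/-- Maximal Roman dominating function: an Rdf such that `V_0(f)` is not a dominating set. -/
def IsMRDF (G : SimpleGraph V) (f : V → ℕ) : Prop :=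
  IsRDF G f ∧ closedNbhdSet G (Vlevel f 0) ≠ Set.univ

/-- Total Roman dominating function: an Rdf such that `G[V_1(f) ∪ V_2(f)]` has no isolated
vertices. -/
def IsTRDF (G : SimpleGraph V) (f : V → ℕ) : Prop :=
  IsRDF G f ∧ ∀ v ∈ Vlevel f 1 ∪ Vlevel f 2, ∃ u ∈ Vlevel f 1 ∪ Vlevel f 2, G.Adj v u

/-- Connected Roman dominating function: an Rdf such that `G[V_1(f) ∪ V_2(f)]` is connected. -/
def IsCRDF (G : SimpleGraph V) (f : V → ℕ) : Prop :=
  IsRDF G f ∧ (G.induce (Vlevel f 1 ∪ Vlevel f 2)).Connected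

/-- Vertex set of `G_n`: `Sum.inl i = a_{i+1}` and `Sum.inr (k, j) = u_{k+1, j+1}`
(0-based indices). -/
abbrev GnVert (n : ℕ) := (Fin n) ⊕ ((Fin (n - 1)) × (Fin 2))

/-- One direction of the edges of `G_n`: `a_i` is adjacent to `u_{k,j}` iff
`i = k` or `i = k + 1` (0-based). -/
def GnRel (n : ℕ) : GnVert n → GnVert n → Prop
  | Sum.inl i, Sum.inr k => (i : ℕ) = (k.1 : ℕ) ∨ (i : ℕ) = (k.1 : ℕ) + 1
  | _, _ => False

/-- The graph `G_n`. -/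
def GnGraph (n : ℕ) : SimpleGraph (GnVert n) where
  Adj x y := GnRel n x y ∨ GnRel n y x
  symm := ⟨fun _ _ h => Or.symm h⟩
  loopless := ⟨by rintro (i | k) (h | h) <;> exact h⟩

/-- The set `A = {a_{2i} : i ∈ [⌊n/2⌋]}`, i.e. the vertices `a_i` with even 1-based
index (odd 0-based index). -/
def GnA (n : ℕ) : Set (GnVert n) :=
  {x | ∃ i : Fin n, x = Sum.inl i ∧ (i : ℕ) % 2 = 1}

namespace Stmt19

/-- the candidate functions: a_i gets 2 if i odd else 1; u_{k,j} gets 1 iff j = c k. -/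
def fc (n : ℕ) (c : Fin (n-1) → Fin 2) : GnVert n → ℕ
  | Sum.inl i => if (i : ℕ) % 2 = 1 then 2 else 1
  | Sum.inr kj => if kj.2 = c kj.1 then 1 else 0

def other (j : Fin 2) : Fin 2 := ⟨1 - j.1, by omega⟩

lemma other_ne (j : Fin 2) : other j ≠ j := by
  rcases j with ⟨_ | _ | _, h⟩ <;> simp_all [other] <;> omega

lemma adj_iff (n : ℕ) (i : Fin n) (k : Fin (n-1)) (j : Fin 2) :
    (GnGraph n).Adj (Sum.inl i) (Sum.inr (k, j)) ↔ ((i:ℕ) = k ∨ (i:ℕ) = (k:ℕ) + 1) := by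
  simp [GnGraph, GnRel]

lemma not_adj_ll (n : ℕ) (i i' : Fin n) : ¬ (GnGraph n).Adj (Sum.inl i) (Sum.inl i') := by
  simp [GnGraph, GnRel]

lemma not_adj_rr (n : ℕ) (x y : Fin (n-1) × Fin 2) :
    ¬ (GnGraph n).Adj (Sum.inr x) (Sum.inr y) := by
  simp [GnGraph, GnRel]

lemma induce_adj {V : Type*} {G : SimpleGraph V} {T : Set V} {x y : T} :
    (G.induce T).Adj x y ↔ G.Adj x.1 y.1 := by
  simp [SimpleGraph.comap]

lemma support_eq {V : Type*} (g : V → ℕ) (hg : ∀ v, g v ≤ 2) :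
    Vlevel g 1 ∪ Vlevel g 2 = {v | g v ≠ 0} := by
  ext v
  simp only [Vlevel, Set.mem_union, Set.mem_setOf_eq]
  have := hg v; omega

lemma walk_const {V : Type*} {G : SimpleGraph V} (φ : V → Bool)
    (h : ∀ a b, G.Adj a b → φ a = φ b) {x y : V} (w : G.Walk x y) : φ x = φ y := by
  induction w with
  | nil => rfl
  | cons h' _ ih => exact (h _ _ h').trans ih

lemma not_connected (n : ℕ) (T : Set (GnVert n)) (k : Fin (n-1))
    (hU : ∀ j : Fin 2, Sum.inr (k, j) ∉ T)
    (x y : Fin n) (hx : (x:ℕ) ≤ k) (hy : (y:ℕ) = (k:ℕ) + 1)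
    (hxT : Sum.inl x ∈ T) (hyT : Sum.inl y ∈ T) :
    ¬ ((GnGraph n).induce T).Connected := by
  intro hconn
  obtain ⟨w⟩ := hconn.preconnected ⟨Sum.inl x, hxT⟩ ⟨Sum.inl y, hyT⟩
  set φ : T → Bool := fun v =>
    match v.1 with
    | Sum.inl i => decide ((i:ℕ) ≤ k)
    | Sum.inr mj => decide ((mj.1:ℕ) ≤ k) with hφ
  have hedge : ∀ a b : T, ((GnGraph n).induce T).Adj a b → φ a = φ b := by
    rintro ⟨(i | ⟨m, j⟩), ha⟩ ⟨(i' | ⟨m', j'⟩), hb⟩ hadj <;>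
      rw [induce_adj] at hadj
    · exact absurd hadj (not_adj_ll n i i')
    · rw [adj_iff] at hadj
      have hmk : (m':ℕ) ≠ k := by
        intro h
        exact hU j' (by
          have : m' = k := Fin.ext h
          rw [this] at hb; exact hb)
      simp only [hφ]
      rw [decide_eq_decide]
      omega
    · rw [(GnGraph n).adj_comm, adj_iff] at hadj
      have hmk : (m:ℕ) ≠ k := by
        intro h
        exact hU j (by
          have : m = k := Fin.ext h
          rw [this] at ha; exact ha)
      simp only [hφ]
      rw [decide_eq_decide]
      omega
    · exact absurd hadj (not_adj_rr n _ _)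
  have := walk_const φ hedge w
  simp only [hφ, decide_eq_decide] at this
  omega

end Stmt19

namespace Stmt19

lemma fc_le2 (n : ℕ) (c : Fin (n-1) → Fin 2) (v : GnVert n) : fc n c v ≤ 2 := by
  rcases v with i | kj <;> simp only [fc] <;> split <;> omega

lemma mem_S_inl (n : ℕ) (c : Fin (n-1) → Fin 2) (i : Fin n) :
    Sum.inl i ∈ Vlevel (fc n c) 1 ∪ Vlevel (fc n c) 2 := by
  simp only [Vlevel, Set.mem_union, Set.mem_setOf_eq, fc]
  by_cases h : (i:ℕ) % 2 = 1 <;> simp [h]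

lemma mem_S_inr (n : ℕ) (c : Fin (n-1) → Fin 2) (k : Fin (n-1)) :
    Sum.inr (k, c k) ∈ Vlevel (fc n c) 1 ∪ Vlevel (fc n c) 2 := by
  simp [Vlevel, fc]

lemma fc_connected (n : ℕ) (hn : 2 ≤ n) (c : Fin (n-1) → Fin 2) :
    ((GnGraph n).induce (Vlevel (fc n c) 1 ∪ Vlevel (fc n c) 2)).Connected := by
  set S := Vlevel (fc n c) 1 ∪ Vlevel (fc n c) 2 with hS
  set H := (GnGraph n).induce S with hH
  have h0n : 0 < n := by omega
  set a0 : ↥S := ⟨Sum.inl ⟨0, h0n⟩, mem_S_inl n c _⟩ with ha0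
  have key : ∀ m : ℕ, ∀ hm : m < n, H.Reachable ⟨Sum.inl ⟨m, hm⟩, mem_S_inl n c _⟩ a0 := by
    intro m
    induction m with
    | zero => intro hm; exact SimpleGraph.Reachable.refl _
    | succ m ih =>
      intro hm
      have hm' : m < n := by omega
      have hk : m < n - 1 := by omega
      set k : Fin (n-1) := ⟨m, hk⟩ with hkdef
      set u : ↥S := ⟨Sum.inr (k, c k), mem_S_inr n c k⟩ with hu
      have h1 : H.Adj ⟨Sum.inl ⟨m+1, hm⟩, mem_S_inl n c _⟩ u := by
        rw [hH, induce_adj, adj_iff]; right; rfl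
      have h2 : H.Adj u ⟨Sum.inl ⟨m, hm'⟩, mem_S_inl n c _⟩ := by
        rw [hH, induce_adj, (GnGraph n).adj_comm, adj_iff]; left; rfl
      exact (h1.reachable.trans h2.reachable).trans (ih hm')
  have claim : ∀ v : ↥S, H.Reachable v a0 := by
    rintro ⟨(i | ⟨k, j⟩), hv⟩
    · exact key i.1 i.2
    · have hj : j = c k := by
        rcases hv with hv | hv <;>
          simp only [Vlevel, Set.mem_setOf_eq, fc] at hv <;>
          [skip; skip] <;> (by_cases h : j = c k; exact h; simp [h] at hv)
      have hkn : (k:ℕ) < n := by have := k.2; omega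
      have h2 : H.Adj ⟨Sum.inr (k, j), hv⟩ ⟨Sum.inl ⟨k, hkn⟩, mem_S_inl n c _⟩ := by
        rw [hH, induce_adj, (GnGraph n).adj_comm, adj_iff]; left; rfl
      exact h2.reachable.trans (key k.1 hkn)
  have : Nonempty ↥S := ⟨a0⟩
  exact ⟨fun x y => (claim x).trans (claim y).symm⟩

lemma fc_isCRDF (n : ℕ) (hn : 2 ≤ n) (c : Fin (n-1) → Fin 2) :
    IsCRDF (GnGraph n) (fc n c) := by
  refine ⟨⟨fc_le2 n c, ?_⟩, fc_connected n hn c⟩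
  rintro (i | ⟨k, j⟩) h0
  · simp only [fc] at h0; split at h0 <;> omega
  · have hkn : (k:ℕ) < n - 1 := k.2
    by_cases hpar : (k:ℕ) % 2 = 1
    · refine ⟨Sum.inl ⟨k, by omega⟩, ?_, ?_⟩
      · rw [(GnGraph n).adj_comm, adj_iff]; left; rfl
      · simp [fc, hpar]
    · refine ⟨Sum.inl ⟨(k:ℕ)+1, by omega⟩, ?_, ?_⟩
      · rw [(GnGraph n).adj_comm, adj_iff]; right; rfl
      · simp only [fc]
        rw [if_pos]; omega
  
lemma fc_V2 (n : ℕ) (c : Fin (n-1) → Fin 2) : Vlevel (fc n c) 2 = GnA n := by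
  ext v
  rcases v with i | ⟨k, j⟩
  · simp only [Vlevel, Set.mem_setOf_eq, fc, GnA]
    constructor
    · intro h
      split at h
      · exact ⟨i, rfl, by assumption⟩
      · omega
    · rintro ⟨i', hi', hpar⟩
      obtain rfl : i = i' := by injection hi'
      simp [hpar]
  · simp only [Vlevel, Set.mem_setOf_eq, fc, GnA]
    constructor
    · intro h; split at h <;> omega
    · rintro ⟨i', hi', -⟩; exact absurd hi' (by simp)

end Stmt19

namespace Stmt19

lemma fc_minimal (n : ℕ) (hn : 2 ≤ n) (c : Fin (n-1) → Fin 2) :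
    ∀ g, IsCRDF (GnGraph n) g → g ≤ fc n c → g = fc n c := by
  rintro g ⟨⟨hg2, hgdom⟩, hgconn⟩ hle
  have stepA : ∀ i : Fin n, (i:ℕ) % 2 ≠ 1 → g (Sum.inl i) = 1 := by
    intro i hpar
    have h1 : g (Sum.inl i) ≤ 1 := by
      have := hle (Sum.inl i); simpa [fc, hpar] using this
    rcases Nat.lt_or_ge (g (Sum.inl i)) 1 with h | h
    · exfalso
      obtain ⟨u, hadj, hu2⟩ := hgdom (Sum.inl i) (by omega)
      rcases u with i' | kj
      · exact not_adj_ll n i i' hadj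
      · have hh : g (Sum.inr kj) ≤ fc n c (Sum.inr kj) := hle _
        have hfc : fc n c (Sum.inr kj) ≤ 1 := by simp only [fc]; split <;> omega
        omega
    · omega
  have stepB : ∀ i : Fin n, (i:ℕ) % 2 = 1 → g (Sum.inl i) = 2 := by
    intro i hpar
    by_contra hne
    have h2 : g (Sum.inl i) ≤ 2 := hg2 _
    have h1 : g (Sum.inl i) ≤ 1 := by omega
    have hi1 : 1 ≤ (i:ℕ) := by omega
    have hin : (i:ℕ) < n := i.2
    set k : Fin (n-1) := ⟨(i:ℕ) - 1, by omega⟩ with hk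
    have hfc0 : fc n c (Sum.inr (k, other (c k))) = 0 := by
      simp [fc, other_ne (c k)]
    have hg0 : g (Sum.inr (k, other (c k))) = 0 := by
      have hh : g (Sum.inr (k, other (c k))) ≤ fc n c (Sum.inr (k, other (c k))) := hle _
      omega
    obtain ⟨u, hadj, hu2⟩ := hgdom _ hg0
    rcases u with m | kj
    · rw [(GnGraph n).adj_comm, adj_iff] at hadj
      rcases hadj with hm | hm
      · have : (m:ℕ) % 2 ≠ 1 := by simp only [hk] at hm; omega
        have := stepA m this; omega
      · have : m = i := Fin.ext (by simp only [hk] at hm; omega)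
        rw [this] at hu2; omega
    · exact not_adj_rr n _ _ hadj
  have gsupp : Vlevel g 1 ∪ Vlevel g 2 = {v | g v ≠ 0} := support_eq g hg2
  have stepC : ∀ k : Fin (n-1), g (Sum.inr (k, c k)) = 1 := by
    intro k
    have h1 : g (Sum.inr (k, c k)) ≤ 1 := by
      have := hle (Sum.inr (k, c k)); simpa [fc] using this
    rcases Nat.lt_or_ge (g (Sum.inr (k, c k))) 1 with h | h
    · exfalso
      have hall : ∀ j : Fin 2, g (Sum.inr (k, j)) = 0 := by
        intro j
        by_cases hj : j = c k
        · rw [hj]; omega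
        · have hfcj : fc n c (Sum.inr (k, j)) = 0 := by simp [fc, hj]
          have hh : g (Sum.inr (k, j)) ≤ fc n c (Sum.inr (k, j)) := hle _
          omega
      have hkn : (k:ℕ) < n := by have := k.2; omega
      have hkn' : (k:ℕ) + 1 < n := by have := k.2; omega
      set x : Fin n := ⟨k, hkn⟩ with hx
      set y : Fin n := ⟨(k:ℕ)+1, hkn'⟩ with hy
      have hxT : Sum.inl x ∈ {v | g v ≠ 0} := by
        simp only [Set.mem_setOf_eq]
        by_cases hpar : (x:ℕ) % 2 = 1
        · rw [stepB x hpar]; omega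
        · rw [stepA x hpar]; omega
      have hyT : Sum.inl y ∈ {v | g v ≠ 0} := by
        simp only [Set.mem_setOf_eq]
        by_cases hpar : (y:ℕ) % 2 = 1
        · rw [stepB y hpar]; omega
        · rw [stepA y hpar]; omega
      have hU : ∀ j : Fin 2, Sum.inr (k, j) ∉ {v : GnVert n | g v ≠ 0} := by
        intro j
        simp only [Set.mem_setOf_eq, not_not]
        exact hall j
      rw [gsupp] at hgconn
      exact not_connected n _ k hU x y le_rfl rfl hxT hyT hgconn
    · omega
  funext v
  rcases v with i | ⟨k, j⟩
  · by_cases hpar : (i:ℕ) % 2 = 1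
    · rw [stepB i hpar]; simp [fc, hpar]
    · rw [stepA i hpar]; simp [fc, hpar]
  · by_cases hj : j = c k
    · rw [hj, stepC k]; simp [fc]
    · have hfc : fc n c (Sum.inr (k, j)) = 0 := by simp [fc, hj]
      have hh : g (Sum.inr (k, j)) ≤ fc n c (Sum.inr (k, j)) := hle _
      omega

lemma fc_mem_CSet (n : ℕ) (hn : 2 ≤ n) (c : Fin (n-1) → Fin 2) :
    fc n c ∈ CSet (IsCRDF (GnGraph n)) (GnA n) :=
  ⟨⟨fc_isCRDF n hn c, fc_minimal n hn c⟩, fc_V2 n c⟩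

lemma fc_injective (n : ℕ) : Function.Injective (fc n) := by
  intro c c' h
  funext k
  have := congrFun h (Sum.inr (k, c k))
  simp only [fc, if_pos rfl] at this
  by_contra hne
  rw [if_neg hne] at this
  exact one_ne_zero this

end Stmt19

/-- `|C_{CRDF,G_n}[A]| ≥ 2^{n/3}`. -/
theorem stmt19 (n : ℕ) (hn : 2 ≤ n) :
    (2 : ℝ) ^ ((n : ℝ) / 3) ≤ ((CSet (IsCRDF (GnGraph n)) (GnA n)).ncard : ℝ) := by
  have hfin : (CSet (IsCRDF (GnGraph n)) (GnA n)).Finite := by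
    have hsub : CSet (IsCRDF (GnGraph n)) (GnA n) ⊆
        Set.pi Set.univ (fun _ : GnVert n => Set.Iic 2) := by
      intro f hf
      simp only [Set.mem_pi, Set.mem_univ, Set.mem_Iic, forall_const]
      intro v
      exact hf.1.1.1.1 v
    exact (Set.Finite.pi (fun _ => Set.finite_Iic 2)).subset hsub
  have hrange : Set.range (Stmt19.fc n) ⊆ CSet (IsCRDF (GnGraph n)) (GnA n) := by
    rintro _ ⟨c, rfl⟩
    exact Stmt19.fc_mem_CSet n hn c
  have hcard : 2 ^ (n - 1) ≤ (CSet (IsCRDF (GnGraph n)) (GnA n)).ncard := by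
    have h1 : (Set.range (Stmt19.fc n)).ncard = 2 ^ (n - 1) := by
      rw [← Nat.card_coe_set_eq, Nat.card_range_of_injective (Stmt19.fc_injective n)]
      simp [Nat.card_eq_fintype_card]
    rw [← h1]
    exact Set.ncard_le_ncard hrange hfin
  have h3 : (2 : ℝ) ^ ((n : ℝ) / 3) ≤ (2 : ℝ) ^ (((n - 1 : ℕ) : ℝ)) := by
    apply Real.rpow_le_rpow_of_exponent_le one_le_two
    have hcast : ((n - 1 : ℕ) : ℝ) = (n : ℝ) - 1 := by
      rw [Nat.cast_sub (by omega : 1 ≤ n)]; norm_num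
    rw [hcast]
    have hn' : (2 : ℝ) ≤ (n : ℝ) := by exact_mod_cast hn
    linarith
  calc (2 : ℝ) ^ ((n : ℝ) / 3) ≤ (2 : ℝ) ^ (((n - 1 : ℕ) : ℝ)) := h3
    _ = ((2 ^ (n - 1) : ℕ) : ℝ) := by rw [Real.rpow_natCast]; push_cast; ring
    _ ≤ _ := by exact_mod_cast hcard
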